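/- Let α, β, γ, δ, ε, κ (=ϰ), λ, μ, ν be real numbers satisfying μ > 0, α > 0, γ > 0, ε > 0, 3λ+2μ > 0, μγ − κ² > 0, αε − ν² > 0, (μ+α)(γ+ε) − (κ+ν)² > 0, and (3λ+2μ)(3β+2γ) − (3δ+2κ)² > 0. Let Ω ⊆ ℝ³ be open and connected and let u, ω : Ω → ℝ³ be continuously differentiable. Define u_{pq}(x) = ∂ₚu_q(x) − Σ_{k=1}^{3} ε_{pqk} ω_k(x) and ω_{pq}(x) = ∂ₚω_q(x), and set E(U,U)(x) := Σ_{p,q=1}^{3} [ (μ+α)u_{pq}² + (μ−α)u_{pq}u_{qp} + 2(κ+ν)u_{pq}ω_{pq} + 2(κ−ν)u_{pq}ω_{qp} + (γ+ε)ω_{pq}² + (γ−ε)ω_{pq}ω_{qp} + 2δ u_{pp}ω_{qq} + λ u_{pp}u_{qq} + β ω_{pp}ω_{qq} ](x). Then E(U,U)(x) = 0 for all x ∈ Ω if and only if there exist constant vectors a, b ∈ ℝ³ with u(x) = a × x + b and ω(x) = a for all x ∈ Ω. -/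

import Mathlib

set_option maxHeartbeats 2000000

/-- The Levi-Civitá permutation symbol on indices `{0,1,2}` (as reals). -/
noncomputable def leviCivita (p q k : Fin 3) : ℝ :=
  (((q : ℤ) - (p : ℤ)) * ((k : ℤ) - (p : ℤ)) * ((k : ℤ) - (q : ℤ)) : ℤ) / 2

/-- The strain tensor `u_{pq}(U) = ∂ₚu_q − Σ_k ε_{pqk} ω_k` of the pair `(u, ω)`. -/
noncomputable def strainTensor (u ω : (Fin 3 → ℝ) → (Fin 3 → ℝ))
    (x : Fin 3 → ℝ) (p q : Fin 3) : ℝ :=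
  fderiv ℝ u x (Pi.single p 1) q - ∑ k : Fin 3, leviCivita p q k * ω x k

/-- The torsion (curvature) tensor `ω_{pq}(U) = ∂ₚω_q`. -/
noncomputable def torsionTensor (ω : (Fin 3 → ℝ) → (Fin 3 → ℝ))
    (x : Fin 3 → ℝ) (p q : Fin 3) : ℝ :=
  fderiv ℝ ω x (Pi.single p 1) q

/-- The hemitropic potential energy density evaluated on tensors `ξ`, `η`. -/
noncomputable def energyDensity (α β γ δ ε κ lam μ ν : ℝ)
    (ξ η : Fin 3 → Fin 3 → ℝ) : ℝ :=
  ∑ p : Fin 3, ∑ q : Fin 3,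
    ((μ + α) * ξ p q ^ 2 + (μ - α) * ξ p q * ξ q p
      + 2 * (κ + ν) * ξ p q * η p q + 2 * (κ - ν) * ξ p q * η q p
      + (γ + ε) * η p q ^ 2 + (γ - ε) * η p q * η q p
      + 2 * δ * ξ p p * η q q + lam * ξ p p * ξ q q + β * η p p * η q q)


lemma quad_nonneg {A B C : ℝ} (hA : 0 < A) (hD : 0 < A * C - B ^ 2) (x y : ℝ) :
    0 ≤ A * x ^ 2 + 2 * B * x * y + C * y ^ 2 := by
  nlinarith [sq_nonneg (A * x + B * y), mul_nonneg hD.le (sq_nonneg y)]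

lemma quad_eq_zero {A B C : ℝ} (hA : 0 < A) (hD : 0 < A * C - B ^ 2) {x y : ℝ}
    (h : A * x ^ 2 + 2 * B * x * y + C * y ^ 2 = 0) : x = 0 ∧ y = 0 := by
  have h1 : (A * x + B * y) ^ 2 + (A * C - B ^ 2) * y ^ 2 = 0 := by
    linear_combination A * h
  have h4 : (A * C - B ^ 2) * y ^ 2 = 0 :=
    le_antisymm (by nlinarith [sq_nonneg (A * x + B * y)]) (mul_nonneg hD.le (sq_nonneg y))
  have hy : y = 0 := by
    rcases mul_eq_zero.1 h4 with h5 | h5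
    · exact absurd h5 hD.ne'
    · exact pow_eq_zero_iff (n := 2) (by norm_num) |>.1 h5
  subst hy
  have hx2 : A * x ^ 2 = 0 := by linear_combination h
  rcases mul_eq_zero.1 hx2 with h5 | h5
  · exact absurd h5 hA.ne'
  · exact ⟨pow_eq_zero_iff (n := 2) (by norm_num) |>.1 h5, rfl⟩

lemma sum10_zero {p1 p2 p3 p4 p5 p6 p7 p8 p9 p10 : ℝ}
    (h1 : 0 ≤ p1) (h2 : 0 ≤ p2) (h3 : 0 ≤ p3) (h4 : 0 ≤ p4) (h5 : 0 ≤ p5)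
    (h6 : 0 ≤ p6) (h7 : 0 ≤ p7) (h8 : 0 ≤ p8) (h9 : 0 ≤ p9) (h10 : 0 ≤ p10)
    (h : (1/3) * p1 + 2 * p2 + 2 * p3 + 2 * p4 + 4 * p5 + 4 * p6 + 4 * p7 + 4 * p8 + 4 * p9 + 4 * p10 = 0) :
    p1 = 0 ∧ p2 = 0 ∧ p3 = 0 ∧ p4 = 0 ∧ p5 = 0 ∧ p6 = 0 ∧ p7 = 0 ∧ p8 = 0 ∧ p9 = 0 ∧ p10 = 0 := by
  refine ⟨?_, ?_, ?_, ?_, ?_, ?_, ?_, ?_, ?_, ?_⟩ <;> linarith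

lemma tensors_aux (α β γ δ ε κ lam μ ν : ℝ)
    (hμ : 0 < μ) (hα : 0 < α) (hγ : 0 < γ) (hε : 0 < ε)
    (hlamμ : 0 < 3 * lam + 2 * μ)
    (hμγ : 0 < μ * γ - κ ^ 2) (hαε : 0 < α * ε - ν ^ 2)
    (hlamβ : 0 < (3 * lam + 2 * μ) * (3 * β + 2 * γ) - (3 * δ + 2 * κ) ^ 2)
    (x00 x01 x02 x10 x11 x12 x20 x21 x22 y00 y01 y02 y10 y11 y12 y20 y21 y22 : ℝ)
    (hE : ((μ + α) * x00 ^ 2 + (μ - α) * x00 * x00 + 2 * (κ + ν) * x00 * y00 + 2 * (κ - ν) * x00 * y00 + (γ + ε) * y00 ^ 2 + (γ - ε) * y00 * y00 + 2 * δ * x00 * y00 + lam * x00 * x00 + β * y00 * y00) + ((μ + α) * x01 ^ 2 + (μ - α) * x01 * x10 + 2 * (κ + ν) * x01 * y01 + 2 * (κ - ν) * x01 * y10 + (γ + ε) * y01 ^ 2 + (γ - ε) * y01 * y10 + 2 * δ * x00 * y11 + lam * x00 * x11 + β * y00 * y11) + ((μ + α) * x02 ^ 2 + (μ - α) * x02 *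 x20 + 2 * (κ + ν) * x02 * y02 + 2 * (κ - ν) * x02 * y20 + (γ + ε) * y02 ^ 2 + (γ - ε) * y02 * y20 + 2 * δ * x00 * y22 + lam * x00 * x22 + β * y00 * y22) + ((μ + α) * x10 ^ 2 + (μ - α) * x10 * x01 + 2 * (κ + ν) * x10 * y10 + 2 * (κ - ν) * x10 * y01 + (γ + ε) * y10 ^ 2 + (γ - ε) * y10 * y01 + 2 * δ * x11 * y00 + lam * x11 * x00 + β * y11 * y00) + ((μ + α) * x11 ^ 2 + (μ - α) * x11 * x11 + 2 * (κ + ν) * x11 * y11 + 2 * (κ - ν) * x11 * y11 + (γ + ε) * y11 ^ 2 + (γ - ε) * y11 * y11 + 2 * δ * x11 * y11 + lam * x11 * x11 + β * y11 * y11) + ((μ + α) * x12 ^ 2 + (μ - α) * x12 * x21 + 2 * (κ + ν) * x12 * y12 + 2 * (κ - ν) * x12 * y21 + (γ + ε) * y12 ^ 2 + (γ - ε) * y12 * y21 + 2 * δ * x11 * y22 + lam * x11 * x22 + β * y11 * y22) + ((μ + α) * x20 ^ 2 + (μ - α) * x20 * x02 + 2 * (κ + ν) * x20 * y20 + 2 *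 (κ - ν) * x20 * y02 + (γ + ε) * y20 ^ 2 + (γ - ε) * y20 * y02 + 2 * δ * x22 * y00 + lam * x22 * x00 + β * y22 * y00) + ((μ + α) * x21 ^ 2 + (μ - α) * x21 * x12 + 2 * (κ + ν) * x21 * y21 + 2 * (κ - ν) * x21 * y12 + (γ + ε) * y21 ^ 2 + (γ - ε) * y21 * y12 + 2 * δ * x22 * y11 + lam * x22 * x11 + β * y22 * y11) + ((μ + α) * x22 ^ 2 + (μ - α) * x22 * x22 + 2 * (κ + ν) * x22 * y22 + 2 * (κ - ν) * x22 * y22 + (γ + ε) * y22 ^ 2 + (γ - ε) * y22 * y22 + 2 * δ * x22 * y22 + lam * x22 * x22 + β * y22 * y22) = 0) :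
    (x00 = 0 ∧ x01 = 0 ∧ x02 = 0 ∧ x10 = 0 ∧ x11 = 0 ∧ x12 = 0 ∧ x20 = 0 ∧ x21 = 0 ∧ x22 = 0) ∧
    (y00 = 0 ∧ y01 = 0 ∧ y02 = 0 ∧ y10 = 0 ∧ y11 = 0 ∧ y12 = 0 ∧ y20 = 0 ∧ y21 = 0 ∧ y22 = 0) := by
  have key : (1/3) * ((3 * lam + 2 * μ) * (x00 + x11 + x22) ^ 2 + 2 * (3 * δ + 2 * κ) * (x00 + x11 + x22) * (y00 + y11 + y22) + (3 * β + 2 * γ) * (y00 + y11 + y22) ^ 2) + 2 * (μ * (x00 - (x00 + x11 + x22) / 3) ^ 2 + 2 * κ * (x00 - (x00 + x11 + x22) / 3) * (y00 - (y00 + y11 + y22) / 3) + γ * (y00 - (y00 + y11 + y22) / 3) ^ 2) + 2 * (μ * (x11 - (x00 + x11 + x22) / 3) ^ 2 + 2 * κ * (x11 - (x00 + x11 + x22) / 3) * (y11 - (y00 + y11 + y22) / 3) + γ * (y11 - (y00 + y11 + y22) / 3) ^ 2) + 2 * (μ * (x22 - (x00 + x11 + x22) / 3) ^ 2 + 2 *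 κ * (x22 - (x00 + x11 + x22) / 3) * (y22 - (y00 + y11 + y22) / 3) + γ * (y22 - (y00 + y11 + y22) / 3) ^ 2) + 4 * (μ * ((x01 + x10) / 2) ^ 2 + 2 * κ * ((x01 + x10) / 2) * ((y01 + y10) / 2) + γ * ((y01 + y10) / 2) ^ 2) + 4 * (μ * ((x02 + x20) / 2) ^ 2 + 2 * κ * ((x02 + x20) / 2) * ((y02 + y20) / 2) + γ * ((y02 + y20) / 2) ^ 2) + 4 * (μ * ((x12 + x21) / 2) ^ 2 + 2 * κ * ((x12 + x21) / 2) * ((y12 + y21) / 2) + γ * ((y12 + y21) / 2) ^ 2) + 4 * (α * ((x01 - x10) / 2) ^ 2 + 2 * ν * ((x01 - x10) / 2) * ((y01 - y10) / 2) + ε * ((y01 - y10) / 2) ^ 2) + 4 * (α * ((x02 - x20) / 2) ^ 2 + 2 * ν * ((x02 - x20) / 2) * ((y02 - y20) / 2) + ε * ((y02 - y20) / 2) ^ 2) + 4 * (α * ((x12 - x21) / 2) ^ 2 + 2 * ν * ((x12 - x21) / 2) * ((y12 - y21) / 2) + ε * ((y12 - y21) / 2) ^ 2) = 0 := by linear_combination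 hE
  obtain ⟨e1, e2, e3, e4, e5, e6, e7, e8, e9, e10⟩ := sum10_zero
    (quad_nonneg (B := 3 * δ + 2 * κ) hlamμ hlamβ _ _)
    (quad_nonneg (B := κ) hμ hμγ _ _) (quad_nonneg (B := κ) hμ hμγ _ _)
    (quad_nonneg (B := κ) hμ hμγ _ _) (quad_nonneg (B := κ) hμ hμγ _ _)
    (quad_nonneg (B := κ) hμ hμγ _ _) (quad_nonneg (B := κ) hμ hμγ _ _)
    (quad_nonneg (B := ν) hα hαε _ _) (quad_nonneg (B := ν) hα hαε _ _)
    (quad_nonneg (B := ν) hα hαε _ _) key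
  obtain ⟨hT, hS⟩ := quad_eq_zero (B := 3 * δ + 2 * κ) hlamμ hlamβ e1
  obtain ⟨d0x, d0y⟩ := quad_eq_zero (B := κ) hμ hμγ e2
  obtain ⟨d1x, d1y⟩ := quad_eq_zero (B := κ) hμ hμγ e3
  obtain ⟨d2x, d2y⟩ := quad_eq_zero (B := κ) hμ hμγ e4
  obtain ⟨s1x, s1y⟩ := quad_eq_zero (B := κ) hμ hμγ e5
  obtain ⟨s2x, s2y⟩ := quad_eq_zero (B := κ) hμ hμγ e6
  obtain ⟨s3x, s3y⟩ := quad_eq_zero (B := κ) hμ hμγ e7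
  obtain ⟨a1x, a1y⟩ := quad_eq_zero (B := ν) hα hαε e8
  obtain ⟨a2x, a2y⟩ := quad_eq_zero (B := ν) hα hαε e9
  obtain ⟨a3x, a3y⟩ := quad_eq_zero (B := ν) hα hαε e10
  clear hE key e1 e2 e3 e4 e5 e6 e7 e8 e9 e10
  refine ⟨⟨?_, ?_, ?_, ?_, ?_, ?_, ?_, ?_, ?_⟩, ⟨?_, ?_, ?_, ?_, ?_, ?_, ?_, ?_, ?_⟩⟩ <;>
    linarith

open Matrix in
lemma cross_single_eq (a : Fin 3 → ℝ) (p q : Fin 3) :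
    crossProduct a (Pi.single p 1) q = ∑ k : Fin 3, leviCivita p q k * a k := by
  fin_cases p <;> fin_cases q <;>
    simp [cross_apply, leviCivita, Fin.sum_univ_three, Pi.single_apply] <;>
    norm_num

lemma energyDensity_zero {α β γ δ ε κ lam μ ν : ℝ} {ξ η : Fin 3 → Fin 3 → ℝ}
    (hξ : ∀ p q, ξ p q = 0) (hη : ∀ p q, η p q = 0) :
    energyDensity α β γ δ ε κ lam μ ν ξ η = 0 := by
  simp [energyDensity, hξ, hη]

lemma clm_ext_basis (L M : (Fin 3 → ℝ) →L[ℝ] (Fin 3 → ℝ))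
    (h : ∀ p, L (Pi.single p 1) = M (Pi.single p 1)) : L = M := by
  refine ContinuousLinearMap.ext fun v => ?_
  have hv : v = ∑ p : Fin 3, v p • (Pi.single p 1 : Fin 3 → ℝ) := by
    have h1 : ∀ p : Fin 3, (Pi.single p (v p) : Fin 3 → ℝ) = v p • (Pi.single p 1 : Fin 3 → ℝ) := by
      intro p; funext j; by_cases hj : j = p <;> simp [Pi.single_apply, hj]
    calc v = ∑ p : Fin 3, (Pi.single p (v p) : Fin 3 → ℝ) := (Finset.univ_sum_single v).symm
    _ = ∑ p : Fin 3, v p • (Pi.single p 1 : Fin 3 → ℝ) := Finset.sum_congr rfl fun p _ => h1 p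
  rw [hv, map_sum, map_sum]
  exact Finset.sum_congr rfl fun p _ => by rw [map_smul, map_smul, h p]

lemma const_of_fderiv_zero {F : Type*} [NormedAddCommGroup F] [NormedSpace ℝ F]
    {f : (Fin 3 → ℝ) → F} {Ω : Set (Fin 3 → ℝ)} (hΩ : IsOpen Ω) (hconn : IsPreconnected Ω)
    (hdiff : DifferentiableOn ℝ f Ω) (hf' : ∀ x ∈ Ω, fderiv ℝ f x = 0)
    {x y : Fin 3 → ℝ} (hx : x ∈ Ω) (hy : y ∈ Ω) : f y = f x := by
  have loc : ∀ z ∈ Ω, ∃ r > 0, Metric.ball z r ⊆ Ω ∧ ∀ w ∈ Metric.ball z r, f w = f z := by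
    intro z hz
    obtain ⟨r, hr, hball⟩ := Metric.isOpen_iff.1 hΩ z hz
    refine ⟨r, hr, hball, fun w hw => ?_⟩
    exact Convex.is_const_of_fderivWithin_eq_zero (convex_ball z r)
      (hdiff.mono hball)
      (fun v hv => by rw [fderivWithin_of_isOpen Metric.isOpen_ball hv]; exact hf' v (hball hv))
      hw (Metric.mem_ball_self hr)
  set U := {z | z ∈ Ω ∧ f z = f x} with hU
  set V := {z | z ∈ Ω ∧ f z ≠ f x} with hV
  have hUopen : IsOpen U := by
    rw [Metric.isOpen_iff]; rintro z ⟨hz, hfz⟩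
    obtain ⟨r, hr, hball, hc⟩ := loc z hz
    exact ⟨r, hr, fun w hw => ⟨hball hw, (hc w hw).trans hfz⟩⟩
  have hVopen : IsOpen V := by
    rw [Metric.isOpen_iff]; rintro z ⟨hz, hfz⟩
    obtain ⟨r, hr, hball, hc⟩ := loc z hz
    exact ⟨r, hr, fun w hw => ⟨hball hw, by rw [hc w hw]; exact hfz⟩⟩
  have hsub : Ω ⊆ U ∪ V := by
    intro z hz
    by_cases hcase : f z = f x
    · exact Or.inl ⟨hz, hcase⟩
    · exact Or.inr ⟨hz, hcase⟩
  have hdisj : Disjoint U V := by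
    rw [Set.disjoint_left]; rintro z ⟨_, h1⟩ ⟨_, h2⟩; exact h2 h1
  have hfin := IsPreconnected.subset_left_of_subset_union hUopen hVopen hdisj hsub
    ⟨x, hx, ⟨hx, rfl⟩⟩ hconn
  exact (hfin hy).2

/-- Lemma 2.1 of the paper: under the positive definiteness conditions on the
material constants, the energy density `E(U,U)` of a `C¹` pair `(u, ω)` vanishes
identically on an open connected set `Ω ⊆ ℝ³` if and only if `(u, ω)` is a
generalized rigid displacement vector `([a × x] + b, a)`. -/
theorem energyDensity_eq_zero_iff_rigid_displacement
    (α β γ δ ε κ lam μ ν : ℝ)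
    (hμ : 0 < μ) (hα : 0 < α) (hγ : 0 < γ) (hε : 0 < ε)
    (hlamμ : 0 < 3 * lam + 2 * μ)
    (hμγ : 0 < μ * γ - κ ^ 2) (hαε : 0 < α * ε - ν ^ 2)
    (hμαγε : 0 < (μ + α) * (γ + ε) - (κ + ν) ^ 2)
    (hlamβ : 0 < (3 * lam + 2 * μ) * (3 * β + 2 * γ) - (3 * δ + 2 * κ) ^ 2)
    (Ω : Set (Fin 3 → ℝ)) (hΩopen : IsOpen Ω) (hΩconn : IsConnected Ω)
    (u ω : (Fin 3 → ℝ) → (Fin 3 → ℝ))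
    (hu : ContDiffOn ℝ 1 u Ω) (hω : ContDiffOn ℝ 1 ω Ω) :
    (∀ x ∈ Ω, energyDensity α β γ δ ε κ lam μ ν
        (strainTensor u ω x) (torsionTensor ω x) = 0)
    ↔ ∃ a b : Fin 3 → ℝ, ∀ x ∈ Ω, u x = crossProduct a x + b ∧ ω x = a := by
  constructor
  · intro hE
    obtain ⟨x₀, hx₀⟩ := hΩconn.nonempty
    have hudiff : DifferentiableOn ℝ u Ω := hu.differentiableOn one_ne_zero
    have hωdiff : DifferentiableOn ℝ ω Ω := hω.differentiableOn one_ne_zero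
    -- all tensor entries vanish
    have hzero : ∀ x ∈ Ω, ∀ p q : Fin 3,
        strainTensor u ω x p q = 0 ∧ torsionTensor ω x p q = 0 := by
      intro x hx
      have h := hE x hx
      simp only [energyDensity, Fin.sum_univ_three] at h
      have h18 := tensors_aux α β γ δ ε κ lam μ ν hμ hα hγ hε hlamμ hμγ hαε hlamβ
        (strainTensor u ω x 0 0) (strainTensor u ω x 0 1) (strainTensor u ω x 0 2)
        (strainTensor u ω x 1 0) (strainTensor u ω x 1 1) (strainTensor u ω x 1 2)
        (strainTensor u ω x 2 0) (strainTensor u ω x 2 1) (strainTensor u ω x 2 2)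
        (torsionTensor ω x 0 0) (torsionTensor ω x 0 1) (torsionTensor ω x 0 2)
        (torsionTensor ω x 1 0) (torsionTensor ω x 1 1) (torsionTensor ω x 1 2)
        (torsionTensor ω x 2 0) (torsionTensor ω x 2 1) (torsionTensor ω x 2 2)
        (by linear_combination h)
      obtain ⟨⟨e1, e2, e3, e4, e5, e6, e7, e8, e9⟩, f1, f2, f3, f4, f5, f6, f7, f8, f9⟩ := h18
      intro p q
      fin_cases p <;> fin_cases q <;>
        exact ⟨by assumption, by assumption⟩
    -- ω has zero derivative, hence is constant
    have hωfd : ∀ x ∈ Ω, fderiv ℝ ω x = 0 := by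
      intro x hx
      refine clm_ext_basis _ _ fun p => ?_
      funext q
      have := (hzero x hx p q).2
      simpa [torsionTensor] using this
    set a := ω x₀ with ha
    have hωconst : ∀ x ∈ Ω, ω x = a :=
      fun x hx => const_of_fderiv_zero hΩopen hΩconn.isPreconnected hωdiff hωfd hx₀ hx
    -- the derivative of u is the cross product map
    set C : (Fin 3 → ℝ) →L[ℝ] (Fin 3 → ℝ) :=
      LinearMap.toContinuousLinearMap (crossProduct a) with hC
    have hCapp : ∀ v, C v = crossProduct a v := fun v => rfl
    have hufd : ∀ x ∈ Ω, fderiv ℝ u x = C := by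
      intro x hx
      refine clm_ext_basis _ _ fun p => ?_
      funext q
      have h1 := (hzero x hx p q).1
      simp only [strainTensor] at h1
      rw [hωconst x hx] at h1
      have h2 := cross_single_eq a p q
      rw [hCapp, h2]
      linarith
    -- u minus the cross product map is constant
    have hgdiff : DifferentiableOn ℝ (fun y => u y - C y) Ω :=
      hudiff.sub (C.differentiable.differentiableOn)
    have hgfd : ∀ x ∈ Ω, fderiv ℝ (fun y => u y - C y) x = 0 := by
      intro x hx
      have hdu : DifferentiableAt ℝ u x := hudiff.differentiableAt (hΩopen.mem_nhds hx)
      rw [fderiv_fun_sub hdu C.differentiableAt, C.fderiv, hufd x hx, sub_self]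
    refine ⟨a, u x₀ - C x₀, fun x hx => ⟨?_, hωconst x hx⟩⟩
    have hg := const_of_fderiv_zero hΩopen hΩconn.isPreconnected hgdiff hgfd hx₀ hx
    rw [← hCapp]
    have : u x - C x = u x₀ - C x₀ := hg
    funext j
    have hj := congrFun this j
    simp only [Pi.sub_apply] at hj ⊢
    simp only [Pi.add_apply, Pi.sub_apply]
    linarith
  · rintro ⟨a, b, h⟩ x hx
    have hmem : Ω ∈ nhds x := hΩopen.mem_nhds hx
    set C : (Fin 3 → ℝ) →L[ℝ] (Fin 3 → ℝ) :=
      LinearMap.toContinuousLinearMap (crossProduct a) with hC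
    have hCapp : ∀ v, C v = crossProduct a v := fun v => rfl
    have hueq : u =ᶠ[nhds x] fun y => crossProduct a y + b := by
      filter_upwards [hmem] with y hy using (h y hy).1
    have hωeq : ω =ᶠ[nhds x] fun _ => a := by
      filter_upwards [hmem] with y hy using (h y hy).2
    have hufd : fderiv ℝ u x = C := by
      rw [hueq.fderiv_eq]
      have : HasFDerivAt (fun y => crossProduct a y + b) C x := by
        have h1 : HasFDerivAt (fun y => C y) C x := C.hasFDerivAt
        have h2 : (fun y => crossProduct a y + b) = fun y => C y + b := by
          funext y; rw [hCapp]
        rw [h2]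
        exact h1.add_const b
      exact this.fderiv
    have hωfd : fderiv ℝ ω x = 0 := by
      rw [hωeq.fderiv_eq]
      exact fderiv_const_apply a
    have hstrain : ∀ p q, strainTensor u ω x p q = 0 := by
      intro p q
      simp only [strainTensor, hufd, (h x hx).2]
      rw [hCapp, cross_single_eq a p q, sub_self]
    have htor : ∀ p q, torsionTensor ω x p q = 0 := by
      intro p q
      simp [torsionTensor, hωfd]
    exact energyDensity_zero hstrain htor
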